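/- Let A be a finite alphabet and let L be a regular language over A that does not contain the empty word. Then L is +-prefix-closed if and only if there exists a nondeterministic finite automaton over A with finitely many states, with a single initial state q₀, in which every state except q₀ is an accept state and q₀ is not an accept state, and in which no transition leads into q₀ (that is, q₀ ∉ step q a for all states q and letters a), whose accepted language is exactly L. -/

import Mathlib

open Function

/-- A language is regular if it is accepted by a deterministic finite automaton
with a finite state set. -/
def RegularLang {A : Type} (L : Language A) : Prop :=
  ∃ (Q : Type) (_ : Fintype Q) (M : DFA A Q), M.accepts = L

/-- The product of a nonempty word under the letter-assignment `φ`; the empty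
word is sent to `none`. This is the induced map `φ⁺` on nonempty words. -/
def prodPlus {A S : Type} [Semigroup S] (φ : A → S) : List A → Option S
  | [] => none
  | a :: w => some (w.foldl (fun s b => s * φ b) (φ a))

/-- The induced monoid homomorphism `φ*` from the free monoid of words. -/
def monProd {A M : Type} [Monoid M] (φ : A → M) (w : List A) : M :=
  (w.map φ).prod

/-- A semigroup Markov language for `S` over `A` (with respect to `φ`): a regular,
`+`-prefix-closed language of nonempty words mapping bijectively onto `S` under `φ⁺`. -/
structure IsSgMarkovLang {A S : Type} [Semigroup S] (φ : A → S) (L : Language A) : Prop where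
  regular : RegularLang L
  not_empty_mem : [] ∉ L
  plus_prefix_closed : ∀ u v : List A, u ≠ [] → v ≠ [] → u ++ v ∈ L → u ∈ L
  unique_rep : ∀ s : S, ∃! w : List A, w ∈ L ∧ prodPlus φ w = some s

/-- A robust semigroup Markov language: additionally every word of `L` has minimal
length among (nonempty) words representing the same element. -/
structure IsRobustSgMarkovLang {A S : Type} [Semigroup S] (φ : A → S) (L : Language A)
    extends IsSgMarkovLang φ L : Prop where
  min_length : ∀ w ∈ L, ∀ v : List A, prodPlus φ v = prodPlus φ w → w.length ≤ v.length

/-- A monoid Markov language for `M` over `A` (with respect to `φ`): a regular,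
prefix-closed language mapping bijectively onto `M` under `φ*`. -/
structure IsMonMarkovLang {A M : Type} [Monoid M] (φ : A → M) (L : Language A) : Prop where
  regular : RegularLang L
  prefix_closed : ∀ u v : List A, u ++ v ∈ L → u ∈ L
  unique_rep : ∀ m : M, ∃! w : List A, w ∈ L ∧ monProd φ w = m

/-- A robust monoid Markov language: additionally every word of `L` has minimal
length among words representing the same element. -/
structure IsRobustMonMarkovLang {A M : Type} [Monoid M] (φ : A → M) (L : Language A)
    extends IsMonMarkovLang φ L : Prop where
  min_length : ∀ w ∈ L, ∀ v : List A, monProd φ v = monProd φ w → w.length ≤ v.length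

/-- `S` is Markov as a semigroup. -/
def SgMarkov (S : Type) [Semigroup S] : Prop :=
  ∃ (A : Type) (_ : Fintype A) (φ : A → S),
    (∀ s : S, ∃ w : List A, prodPlus φ w = some s) ∧
    ∃ L : Language A, IsSgMarkovLang φ L

/-- `S` is robustly Markov (as a semigroup) with respect to some alphabet. -/
def SgRobustlyMarkov (S : Type) [Semigroup S] : Prop :=
  ∃ (A : Type) (_ : Fintype A) (φ : A → S),
    (∀ s : S, ∃ w : List A, prodPlus φ w = some s) ∧
    ∃ L : Language A, IsRobustSgMarkovLang φ L

/-- `S` is strongly Markov (as a semigroup). -/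
def SgStronglyMarkov (S : Type) [Semigroup S] : Prop :=
  ∀ (A : Type) [Fintype A] (φ : A → S),
    (∀ s : S, ∃ w : List A, prodPlus φ w = some s) →
    ∃ L : Language A, IsRobustSgMarkovLang φ L

/-- `M` is Markov as a monoid. -/
def MonMarkov (M : Type) [Monoid M] : Prop :=
  ∃ (A : Type) (_ : Fintype A) (φ : A → M),
    Surjective (monProd φ) ∧ ∃ L : Language A, IsMonMarkovLang φ L

/-- `M` is robustly Markov (as a monoid) with respect to some alphabet. -/
def MonRobustlyMarkov (M : Type) [Monoid M] : Prop :=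
  ∃ (A : Type) (_ : Fintype A) (φ : A → M),
    Surjective (monProd φ) ∧ ∃ L : Language A, IsRobustMonMarkovLang φ L

/-- `M` is strongly Markov (as a monoid). -/
def MonStronglyMarkov (M : Type) [Monoid M] : Prop :=
  ∀ (A : Type) [Fintype A] (φ : A → M),
    Surjective (monProd φ) →
    ∃ L : Language A, IsRobustMonMarkovLang φ L

/-- A regular language not containing the empty word is `+`-prefix-closed iff it is
recognized by a finite automaton with a single initial state `q₀`, in which every state
except `q₀` is an accept state, and with no transitions into `q₀`. -/
theorem stmt1 {A : Type} [Fintype A] (L : Language A)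
    (hreg : RegularLang L) (hne : [] ∉ L) :
    (∀ u v : List A, u ≠ [] → v ≠ [] → u ++ v ∈ L → u ∈ L) ↔
      ∃ (Q : Type) (_ : Fintype Q) (N : NFA A Q) (q₀ : Q),
        N.start = {q₀} ∧ N.accept = {q : Q | q ≠ q₀} ∧
        (∀ (q : Q) (a : A), q₀ ∉ N.step q a) ∧ N.accepts = L := by
  constructor
  · intro hpc
    obtain ⟨Q, hQ, M, hM⟩ := hreg
    classical
    set N : NFA A (Option Q) :=
      { step := fun s a =>
          match s with
          | none => {p | p = some (M.step M.start a) ∧ M.step M.start a ∈ M.accept}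
          | some q => {p | p = some (M.step q a) ∧ M.step q a ∈ M.accept}
        start := {none}
        accept := {p | p ≠ none} } with hN
    refine ⟨Option Q, inferInstance, N, none, rfl, rfl, ?_, ?_⟩
    · intro q a h
      cases q <;> exact (Option.some_ne_none _ h.1.symm).elim
    · -- soundness lemma
      have sound : ∀ (w : List A) (p : Option Q), p ∈ N.eval w →
          (p = none ∧ w = []) ∨
          (∃ q, p = some q ∧ w ≠ [] ∧ M.eval w = q ∧ q ∈ M.accept) := by
        intro w
        induction w using List.reverseRecOn with
        | nil => intro p hp; exact Or.inl ⟨hp, rfl⟩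
        | append_singleton w a ih =>
          intro p hp
          rw [NFA.eval_append_singleton, NFA.mem_stepSet] at hp
          obtain ⟨s, hs, hstep⟩ := hp
          rcases ih s hs with ⟨rfl, rfl⟩ | ⟨q, rfl, hw, heval, hacc⟩
          · refine Or.inr ⟨M.step M.start a, hstep.1, by simp, ?_, hstep.2⟩
            simp [DFA.eval, DFA.evalFrom]
          · refine Or.inr ⟨M.step q a, hstep.1, by simp, ?_, hstep.2⟩
            rw [DFA.eval_append_singleton, heval]
      -- completeness lemma
      have compl : ∀ w : List A, w ∈ L → some (M.eval w) ∈ N.eval w := by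
        intro w
        induction w using List.reverseRecOn with
        | nil => intro h; exact absurd h hne
        | append_singleton w a ih =>
          intro h
          have hacc : M.eval (w ++ [a]) ∈ M.accept := by
            rw [← DFA.mem_accepts, hM]; exact h
          rcases eq_or_ne w [] with rfl | hw
          · rw [NFA.eval_append_singleton, NFA.mem_stepSet]
            refine ⟨none, rfl, ?_⟩
            simp only [DFA.eval_append_singleton] at hacc ⊢
            exact ⟨by simp [DFA.eval, DFA.evalFrom], hacc⟩
          · have hwL : w ∈ L := hpc w [a] hw (by simp) h
            rw [NFA.eval_append_singleton, NFA.mem_stepSet]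
            refine ⟨some (M.eval w), ih hwL, ?_⟩
            simp only [DFA.eval_append_singleton] at hacc ⊢
            exact ⟨rfl, hacc⟩
      ext w
      constructor
      · rintro ⟨p, hpacc, hp⟩
        rcases sound w p hp with ⟨rfl, rfl⟩ | ⟨q, rfl, hw, heval, hacc⟩
        · exact absurd rfl hpacc
        · rw [← hM, DFA.mem_accepts, heval]; exact hacc
      · intro hw
        exact ⟨some (M.eval w), by simp [hN], compl w hw⟩
  · rintro ⟨Q, hQ, N, q₀, hstart, haccept, hnoin, hacc⟩
    intro u v hu hv huv
    -- helper: evalFrom of empty set is empty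
    have hempty : ∀ (w : List A), N.evalFrom ∅ w = ∅ := by
      intro w
      induction w with
      | nil => rfl
      | cons a w ih => simp [NFA.evalFrom, NFA.stepSet_empty]; exact ih
    -- helper: after a nonempty word, states are ≠ q₀
    have hne0 : ∀ (w : List A) (S : Set Q) (p : Q), w ≠ [] → p ∈ N.evalFrom S w → p ≠ q₀ := by
      intro w
      rcases List.eq_nil_or_concat w with rfl | ⟨w', a, rfl⟩
      · intro _ _ h; exact absurd rfl h
      · intro S p _ hp
        rw [List.concat_eq_append, NFA.evalFrom_append, NFA.evalFrom_singleton, NFA.mem_stepSet] at hp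
        obtain ⟨s, _, hstep⟩ := hp
        intro h; subst h; exact hnoin s a hstep
    rw [← hacc] at huv ⊢
    obtain ⟨p, hpacc, hp⟩ := huv
    rw [NFA.mem_accepts]
    have : N.eval (u ++ v) = N.evalFrom (N.evalFrom N.start u) v := by
      simp [NFA.eval, NFA.evalFrom, List.foldl_append]
    rw [this] at hp
    have hnonempty : (N.evalFrom N.start u).Nonempty := by
      by_contra h
      rw [Set.not_nonempty_iff_eq_empty] at h
      rw [h, hempty] at hp
      exact hp
    obtain ⟨s, hs⟩ := hnonempty
    refine ⟨s, ?_, hs⟩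
    rw [haccept]
    exact hne0 u N.start s hu hs
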